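/- Let s > 0, N ≥ 2, m ≥ 1, and let c_n (n ≠ 0) be real numbers with |c_n| ≤ min(2s/N, 1/|n|). Then for all nonzero integers v, w: Σ |c_{n_1} c_{n_2}| ≪ 2^{-m} · gcd(v,w)/√(|vw|), where the sum is over pairs (n_1, n_2) with (2^m - 1)N < |n_1|, |n_2| ≤ (2^{m+1} - 1)N and n_1 v = n_2 w, with implied constant depending only on s. -/

import Mathlib

set_option maxHeartbeats 1000000 in
theorem gcd_sum_dyadic_coefficient_bound (s : ℝ) (hs : 0 < s) :
    ∃ C : ℝ, 0 < C ∧ ∀ (N : ℕ), 2 ≤ N → ∀ (m : ℕ), 1 ≤ m →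
      ∀ c : ℤ → ℝ,
        (∀ n : ℤ, n ≠ 0 → |c n| ≤ min (2 * s / N) (1 / |(n : ℝ)|)) →
        ∀ v w : ℤ, v ≠ 0 → w ≠ 0 →
          (∑' p : ℤ × ℤ,
              (if (2 ^ m - 1) * (N : ℤ) < |p.1| ∧ |p.1| ≤ (2 ^ (m + 1) - 1) * N ∧
                  (2 ^ m - 1) * (N : ℤ) < |p.2| ∧ |p.2| ≤ (2 ^ (m + 1) - 1) * N ∧
                  p.1 * v = p.2 * w
               then |c p.1 * c p.2| else 0)) ≤
            C * (2 : ℝ) ^ (-(m : ℝ)) * (Int.gcd v w : ℝ) / Real.sqrt |(v : ℝ) * w| := by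
  refine ⟨8, by norm_num, ?_⟩
  intro N hN m hm c hc v w hv hw
  set A : ℤ := (2 ^ m - 1) * (N : ℤ) with hAdef
  set B : ℤ := (2 ^ (m + 1) - 1) * (N : ℤ) with hBdef
  have hN2 : (2:ℤ) ≤ (N:ℤ) := by exact_mod_cast hN
  have h2m : (2:ℤ) ≤ 2 ^ m := by
    calc (2:ℤ) = 2 ^ 1 := by norm_num
    _ ≤ 2 ^ m := pow_le_pow_right₀ (by norm_num) hm
  have hA2 : (2:ℤ) ≤ A := by
    have h1 : (1:ℤ) ≤ 2 ^ m - 1 := by linarith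
    nlinarith
  have hAB : A ≤ B := by
    have : (2:ℤ) ^ m ≤ 2 ^ (m + 1) := pow_le_pow_right₀ (by norm_num) (by omega)
    have hN0 : (0:ℤ) ≤ N := by linarith
    apply mul_le_mul_of_nonneg_right (by linarith) hN0
  have hB0 : (0:ℤ) ≤ B := by linarith
  -- gcd decomposition
  set g : ℕ := Int.gcd v w with hgdef
  have hg0 : 0 < g := Int.gcd_pos_of_ne_zero_left w hv
  have hgZ0 : (0:ℤ) < (g:ℤ) := by exact_mod_cast hg0
  have hgv : (g:ℤ) ∣ v := Int.gcd_dvd_left v w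
  have hgw : (g:ℤ) ∣ w := Int.gcd_dvd_right v w
  set v₁ : ℤ := v / (g:ℤ) with hv₁def
  set w₁ : ℤ := w / (g:ℤ) with hw₁def
  have hvfac : (g:ℤ) * v₁ = v := Int.mul_ediv_cancel' hgv
  have hwfac : (g:ℤ) * w₁ = w := Int.mul_ediv_cancel' hgw
  have hv₁0 : v₁ ≠ 0 := by
    intro h; apply hv; rw [← hvfac, h, mul_zero]
  have hw₁0 : w₁ ≠ 0 := by
    intro h; apply hw; rw [← hwfac, h, mul_zero]
  have hco : IsCoprime w₁ v₁ := by
    rw [Int.isCoprime_iff_gcd_eq_one, Int.gcd_comm]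
    exact Int.gcd_div_gcd_div_gcd hg0
  set L : ℤ := min |v₁| |w₁| with hLdef
  set M : ℤ := max |v₁| |w₁| with hMdef
  have hL0 : 0 < L := lt_min (abs_pos.2 hv₁0) (abs_pos.2 hw₁0)
  have hLM : L ≤ M := min_le_max
  have hM0 : 0 < M := lt_of_lt_of_le hL0 hLM
  have hLMmul : L * M = |v₁| * |w₁| := min_mul_max _ _
  set K : ℤ := B / M with hKdef
  have hK0 : 0 ≤ K := Int.ediv_nonneg hB0 (le_of_lt hM0)
  have hKM : K * M ≤ B := by
    rw [hKdef]; exact Int.ediv_mul_le B (ne_of_gt hM0)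
  -- factorization of solutions
  have key : ∀ a b : ℤ, a * v = b * w → ∃ h : ℤ, a = h * w₁ ∧ b = h * v₁ := by
    intro a b hab
    have h1 : a * v₁ = b * w₁ := by
      apply mul_left_cancel₀ (ne_of_gt hgZ0)
      calc (g:ℤ) * (a * v₁) = a * ((g:ℤ) * v₁) := by ring
        _ = a * v := by rw [hvfac]
        _ = b * w := hab
        _ = b * ((g:ℤ) * w₁) := by rw [hwfac]
        _ = (g:ℤ) * (b * w₁) := by ring
    have h2 : w₁ ∣ a := hco.dvd_of_dvd_mul_right ⟨b, by linarith [h1]⟩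
    obtain ⟨h, hh⟩ := h2
    refine ⟨h, by rw [hh, mul_comm], ?_⟩
    apply mul_right_cancel₀ hw₁0
    rw [← h1, hh]; ring
  classical
  -- the box and support set
  set box : Finset (ℤ × ℤ) := Finset.Icc (-B, -B) (B, B) with hboxdef
  set P : ℤ × ℤ → Prop := fun p =>
    A < |p.1| ∧ |p.1| ≤ B ∧ A < |p.2| ∧ |p.2| ≤ B ∧ p.1 * v = p.2 * w with hPdef
  have hvan : ∀ p : ℤ × ℤ, p ∉ box →
      (if A < |p.1| ∧ |p.1| ≤ B ∧ A < |p.2| ∧ |p.2| ≤ B ∧ p.1 * v = p.2 * w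
       then |c p.1 * c p.2| else 0) = 0 := by
    intro p hp
    rw [if_neg]
    intro hcond
    apply hp
    simp only [hboxdef, Finset.mem_Icc, Prod.le_def]
    obtain ⟨-, h1, -, h2, -⟩ := hcond
    obtain ⟨h1a, h1b⟩ := abs_le.mp h1
    obtain ⟨h2a, h2b⟩ := abs_le.mp h2
    exact ⟨⟨h1a, h2a⟩, ⟨h1b, h2b⟩⟩
  rw [tsum_eq_sum (s := box) (fun p hp => hvan p hp)]
  set S : Finset (ℤ × ℤ) := box.filter P with hSdef
  have hsum : ∑ p ∈ box,
      (if A < |p.1| ∧ |p.1| ≤ B ∧ A < |p.2| ∧ |p.2| ≤ B ∧ p.1 * v = p.2 * w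
       then |c p.1 * c p.2| else 0) = ∑ p ∈ S, |c p.1 * c p.2| := by
    rw [hSdef, Finset.sum_filter]
  rw [hsum]
  -- per-term bound
  set q : ℝ := (L:ℝ) / ((A:ℝ)^2 * (M:ℝ)) with hqdef
  have hAR : (2:ℝ) ≤ (A:ℝ) := by exact_mod_cast hA2
  have hLR : (0:ℝ) < (L:ℝ) := by exact_mod_cast hL0
  have hMR : (0:ℝ) < (M:ℝ) := by exact_mod_cast hM0
  have hLMR : (L:ℝ) ≤ (M:ℝ) := by exact_mod_cast hLM
  have hq0 : 0 ≤ q := by positivity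
  have hterm : ∀ p ∈ S, |c p.1 * c p.2| ≤ q := by
    intro p hp
    rw [hSdef, Finset.mem_filter] at hp
    obtain ⟨-, hp1, hp1b, hp2, hp2b, heq⟩ := hp
    have hp10 : p.1 ≠ 0 := by
      intro h; rw [h] at hp1; simp at hp1; omega
    have hp20 : p.2 ≠ 0 := by
      intro h; rw [h] at hp2; simp at hp2; omega
    obtain ⟨h, hh1, hh2⟩ := key p.1 p.2 heq
    have hc1 : |c p.1| ≤ 1 / |(p.1:ℝ)| := (hc p.1 hp10).trans (min_le_right _ _)
    have hc2 : |c p.2| ≤ 1 / |(p.2:ℝ)| := (hc p.2 hp20).trans (min_le_right _ _)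
    have hx1 : (0:ℝ) < |(p.1:ℝ)| := by
      rw [abs_pos]; exact_mod_cast hp10
    have hx2 : (0:ℝ) < |(p.2:ℝ)| := by
      rw [abs_pos]; exact_mod_cast hp20
    have hcc : |c p.1 * c p.2| ≤ 1 / (|(p.1:ℝ)| * |(p.2:ℝ)|) := by
      rw [abs_mul]
      calc |c p.1| * |c p.2| ≤ (1 / |(p.1:ℝ)|) * (1 / |(p.2:ℝ)|) :=
            mul_le_mul hc1 hc2 (abs_nonneg _) (by positivity)
        _ = 1 / (|(p.1:ℝ)| * |(p.2:ℝ)|) := by rw [div_mul_div_comm, one_mul]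
    refine hcc.trans ?_
    -- now the arithmetic bound
    have hprod : |(p.1:ℝ)| * |(p.2:ℝ)| = (h:ℝ)^2 * ((L:ℝ) * (M:ℝ)) := by
      have : (L * M : ℤ) = |v₁| * |w₁| := hLMmul
      have e1 : |(p.1:ℝ)| = |(h:ℝ)| * |(w₁:ℝ)| := by
        rw [← abs_mul]; congr 1; exact_mod_cast hh1
      have e2 : |(p.2:ℝ)| = |(h:ℝ)| * |(v₁:ℝ)| := by
        rw [← abs_mul]; congr 1; exact_mod_cast hh2
      rw [e1, e2]
      have : ((L:ℝ)) * (M:ℝ) = |(v₁:ℝ)| * |(w₁:ℝ)| := by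
        push_cast [← Int.cast_abs]
        exact_mod_cast hLMmul
      rw [this, ← sq_abs (h:ℝ)]; ring
    have hhl : (A:ℝ) < |(h:ℝ)| * (L:ℝ) := by
      have e1 : (A:ℝ) < |(h:ℝ)| * |(w₁:ℝ)| := by
        have : (A:ℝ) < |(p.1:ℝ)| := by exact_mod_cast hp1
        rw [← abs_mul]
        calc (A:ℝ) < |(p.1:ℝ)| := this
          _ = |((h * w₁ : ℤ) : ℝ)| := by rw [← hh1]
          _ = |(h:ℝ) * (w₁:ℝ)| := by push_cast; rfl
      have e2 : (A:ℝ) < |(h:ℝ)| * |(v₁:ℝ)| := by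
        have : (A:ℝ) < |(p.2:ℝ)| := by exact_mod_cast hp2
        rw [← abs_mul]
        calc (A:ℝ) < |(p.2:ℝ)| := this
          _ = |((h * v₁ : ℤ) : ℝ)| := by rw [← hh2]
          _ = |(h:ℝ) * (v₁:ℝ)| := by push_cast; rfl
      have hL' : (L:ℝ) = min |(v₁:ℝ)| |(w₁:ℝ)| := by
        push_cast [← Int.cast_abs]
        exact_mod_cast congrArg (Int.cast : ℤ → ℝ) hLdef
      rw [hL', mul_min_of_nonneg _ _ (abs_nonneg (h:ℝ))]
      exact lt_min e2 e1
    have hA0R : (0:ℝ) < (A:ℝ) := by linarith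
    have hhl2 : (A:ℝ)^2 < (h:ℝ)^2 * (L:ℝ)^2 := by
      have h1 : (A:ℝ)^2 < (|(h:ℝ)| * (L:ℝ))^2 :=
        pow_lt_pow_left₀ hhl hA0R.le (by norm_num)
      rwa [mul_pow, sq_abs] at h1
    rw [hqdef, div_le_div_iff₀ (by positivity) (by positivity), hprod]
    nlinarith [mul_le_mul_of_nonneg_right hhl2.le hMR.le, hLR, hMR]
  -- cardinality bound
  set T : Finset ℤ := (Finset.Icc (-K) K).erase 0 with hTdef
  have hmap : ∀ p ∈ S, p.1 / w₁ ∈ T := by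
    intro p hp
    rw [hSdef, Finset.mem_filter] at hp
    obtain ⟨-, hp1, hp1b, hp2, hp2b, heq⟩ := hp
    obtain ⟨h, hh1, hh2⟩ := key p.1 p.2 heq
    have hdiv : p.1 / w₁ = h := by rw [hh1, Int.mul_ediv_cancel h hw₁0]
    rw [hdiv, hTdef, Finset.mem_erase, Finset.mem_Icc]
    have hh0 : h ≠ 0 := by
      intro h0; rw [h0, zero_mul] at hh1; rw [hh1] at hp1; simp at hp1; omega
    have habs : |h| * M ≤ B := by
      have e1 : |h| * |w₁| ≤ B := by rw [← abs_mul, ← hh1]; exact hp1b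
      have e2 : |h| * |v₁| ≤ B := by rw [← abs_mul, ← hh2]; exact hp2b
      rcases max_choice |v₁| |w₁| with hmax | hmax
      · rw [hMdef, hmax]; exact e2
      · rw [hMdef, hmax]; exact e1
    have : |h| ≤ K := by
      rw [hKdef, Int.le_ediv_iff_mul_le hM0]; exact habs
    exact ⟨hh0, (abs_le.mp this).1, (abs_le.mp this).2⟩
  have hinj : ∀ p ∈ S, ∀ p' ∈ S, p.1 / w₁ = p'.1 / w₁ → p = p' := by
    intro p hp p' hp' hpp
    rw [hSdef, Finset.mem_filter] at hp hp'
    obtain ⟨-, -, -, -, -, heq⟩ := hp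
    obtain ⟨-, -, -, -, -, heq'⟩ := hp'
    obtain ⟨h, hh1, hh2⟩ := key p.1 p.2 heq
    obtain ⟨h', hh1', hh2'⟩ := key p'.1 p'.2 heq'
    have e1 : p.1 / w₁ = h := by rw [hh1, Int.mul_ediv_cancel h hw₁0]
    have e2 : p'.1 / w₁ = h' := by rw [hh1', Int.mul_ediv_cancel h' hw₁0]
    have : h = h' := by rw [← e1, ← e2, hpp]
    have hfst : p.1 = p'.1 := by rw [hh1, hh1', this]
    have hsnd : p.2 = p'.2 := by rw [hh2, hh2', this]
    exact Prod.ext hfst hsnd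
  have hcard : S.card ≤ T.card := Finset.card_le_card_of_injOn _ hmap hinj
  have hTcard : (T.card : ℤ) ≤ 2 * K := by
    have h0mem : (0:ℤ) ∈ Finset.Icc (-K) K := by
      rw [Finset.mem_Icc]; constructor <;> omega
    rw [hTdef, Finset.card_erase_of_mem h0mem, Int.card_Icc]
    have : (K + 1 - -K).toNat = 2 * K + 1 := by
      rw [Int.toNat_of_nonneg (by omega)]; ring
    omega
  -- put it together
  have hsumle : ∑ p ∈ S, |c p.1 * c p.2| ≤ (S.card : ℝ) * q := by
    have := Finset.sum_le_card_nsmul S (fun p => |c p.1 * c p.2|) q hterm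
    rwa [nsmul_eq_mul] at this
  have hcardR : (S.card : ℝ) ≤ 2 * (K:ℝ) := by
    have : (S.card : ℤ) ≤ 2 * K := le_trans (by exact_mod_cast hcard) hTcard
    exact_mod_cast this
  have hstep : ∑ p ∈ S, |c p.1 * c p.2| ≤ 2 * (K:ℝ) * q :=
    hsumle.trans (mul_le_mul_of_nonneg_right hcardR hq0)
  refine hstep.trans ?_
  -- final arithmetic
  have hgR : (0:ℝ) < (g:ℝ) := by exact_mod_cast hg0
  have hLMcast : ((L:ℝ)) * (M:ℝ) = |(v₁:ℝ)| * |(w₁:ℝ)| := by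
    push_cast [← Int.cast_abs]
    exact_mod_cast hLMmul
  have hvw : |(v:ℝ) * w| = (g:ℝ)^2 * ((L:ℝ) * (M:ℝ)) := by
    have ev : |(v:ℝ)| = (g:ℝ) * |(v₁:ℝ)| := by
      rw [← abs_of_pos hgR, ← abs_mul]
      congr 1
      exact_mod_cast hvfac.symm
    have ew : |(w:ℝ)| = (g:ℝ) * |(w₁:ℝ)| := by
      rw [← abs_of_pos hgR, ← abs_mul]
      congr 1
      exact_mod_cast hwfac.symm
    rw [abs_mul, ev, ew, hLMcast]
    ring
  set r : ℝ := Real.sqrt ((L:ℝ) * (M:ℝ)) with hrdef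
  have hr0 : 0 < r := Real.sqrt_pos.2 (by positivity)
  have hrM : r ≤ (M:ℝ) := by
    rw [hrdef]
    calc Real.sqrt ((L:ℝ) * (M:ℝ)) ≤ Real.sqrt ((M:ℝ) * (M:ℝ)) :=
          Real.sqrt_le_sqrt (mul_le_mul_of_nonneg_right hLMR hMR.le)
      _ = (M:ℝ) := Real.sqrt_mul_self hMR.le
  have hsqrt : Real.sqrt |(v:ℝ) * w| = (g:ℝ) * r := by
    rw [hvw, Real.sqrt_mul (by positivity), Real.sqrt_sq hgR.le, hrdef]
  have hRHS : 8 * (2:ℝ) ^ (-(m:ℝ)) * (g:ℝ) / Real.sqrt |(v:ℝ) * w| = 8 / ((2:ℝ)^m * r) := by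
    rw [hsqrt, Real.rpow_neg (by norm_num), Real.rpow_natCast]
    field_simp
  rw [hRHS]
  have hKR : (K:ℝ) * (M:ℝ) ≤ (B:ℝ) := by exact_mod_cast hKM
  have hK0R : (0:ℝ) ≤ (K:ℝ) := by exact_mod_cast hK0
  have hx2 : (2:ℝ) ≤ 2^m := by exact_mod_cast h2m
  have hnR : (2:ℝ) ≤ (N:ℝ) := by exact_mod_cast hN2
  have hBR : (B:ℝ) = ((2:ℝ)^m * 2 - 1) * (N:ℝ) := by
    rw [hBdef]
    push_cast [pow_succ]
    ring
  have hARR : (A:ℝ) = ((2:ℝ)^m - 1) * (N:ℝ) := by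
    rw [hAdef]; push_cast; ring
  have hBA : 2 * (B:ℝ) * 2^m ≤ 8 * (A:ℝ)^2 := by
    rw [hBR, hARR]
    nlinarith [sq_nonneg ((2:ℝ)^m - 2), sq_nonneg ((N:ℝ) - 2), sq_nonneg ((2:ℝ)^m - 1),
      mul_nonneg (sub_nonneg.2 hnR) (sq_nonneg ((2:ℝ)^m - 1)),
      mul_nonneg (sub_nonneg.2 hnR) (sq_nonneg ((2:ℝ)^m - 2)),
      mul_nonneg (sub_nonneg.2 hx2) (sub_nonneg.2 hnR)]
  have h2m0 : (0:ℝ) < (2:ℝ)^m := by positivity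
  have hgoal : 2 * (K:ℝ) * q = (2 * (K:ℝ) * (L:ℝ)) / ((A:ℝ)^2 * (M:ℝ)) := by
    rw [hqdef]; ring
  rw [hgoal, div_le_div_iff₀ (by positivity) (by positivity)]
  calc 2 * (K:ℝ) * (L:ℝ) * ((2:ℝ)^m * r)
      ≤ 2 * (K:ℝ) * (L:ℝ) * ((2:ℝ)^m * (M:ℝ)) := by
        apply mul_le_mul_of_nonneg_left _ (by positivity)
        exact mul_le_mul_of_nonneg_left hrM (by positivity)
    _ = ((K:ℝ) * (M:ℝ)) * (2 * (L:ℝ) * 2^m) := by ring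
    _ ≤ (B:ℝ) * (2 * (L:ℝ) * 2^m) := by
        apply mul_le_mul_of_nonneg_right hKR (by positivity)
    _ = (2 * (B:ℝ) * 2^m) * (L:ℝ) := by ring
    _ ≤ (8 * (A:ℝ)^2) * (L:ℝ) := mul_le_mul_of_nonneg_right hBA hLR.le
    _ ≤ (8 * (A:ℝ)^2) * (M:ℝ) := mul_le_mul_of_nonneg_left hLMR (by positivity)
    _ = 8 * ((A:ℝ)^2 * (M:ℝ)) := by ring
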